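/- arXiv:2106.01106 — 4 statements merged into one kernel-verified Lean document; each statement's English description precedes it below -/
import Mathlib

section
/- Let $t_0 \in \mathbb{R}$, let $\mathcal{A} : [t_0, \infty) \to \mathbb{R}$ be a $C^1$ bounded function, and let $\xi : [t_0, \infty) \to [0, \infty)$ be continuous and integrable. If there exists $\rho > 0$ such that for all $t \ge t_0$, $|\mathcal{A}'(t) + \rho \mathcal{A}(t)| \le \xi(t) \cdot \sup_{t' \ge t} |\mathcal{A}(t')|$, then there exists $c > 0$ such that for all $t \ge t_0$, $|\mathcal{A}(t)| \le c e^{-\rho t}$. -/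
open Real Set MeasureTheory

theorem stmt0 (t0 : ℝ) (A A' ξ : ℝ → ℝ)
    (hA : ∀ t ∈ Ici t0, HasDerivAt A (A' t) t)
    (hA'c : ContinuousOn A' (Ici t0))
    (hbdd : ∃ M, ∀ t ∈ Ici t0, |A t| ≤ M)
    (hξc : ContinuousOn ξ (Ici t0))
    (hξ0 : ∀ t ∈ Ici t0, 0 ≤ ξ t)
    (hξint : IntegrableOn ξ (Ici t0))
    (ρ : ℝ) (hρ : 0 < ρ)
    (h : ∀ t ∈ Ici t0, |A' t + ρ * A t| ≤ ξ t * sSup ((fun t' => |A t'|) '' Ici t)) :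
    ∃ c > 0, ∀ t ∈ Ici t0, |A t| ≤ c * Real.exp (-ρ * t) := by
  obtain ⟨M, hM⟩ := hbdd
  have hM0 : 0 ≤ M := le_trans (abs_nonneg _) (hM t0 (mem_Ici.2 le_rfl))
  set B : ℝ → ℝ := fun t => sSup ((fun t' => |A t'|) '' Ici t) with hBdef
  have hAcont : ContinuousOn A (Ici t0) := fun t ht =>
    ((hA t ht).continuousAt).continuousWithinAt
  have hBdd : ∀ t, t0 ≤ t → BddAbove ((fun t' => |A t'|) '' Ici t) := by
    intro t ht
    exact ⟨M, by rintro x ⟨v, hv, rfl⟩; exact hM v (le_trans ht hv)⟩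
  have hBge : ∀ t, t0 ≤ t → |A t| ≤ B t := fun t ht =>
    le_csSup (hBdd t ht) ⟨t, mem_Ici.2 le_rfl, rfl⟩
  have hB0 : ∀ t, t0 ≤ t → 0 ≤ B t := fun t ht => (abs_nonneg _).trans (hBge t ht)
  have hBanti : ∀ s t, t0 ≤ s → s ≤ t → B t ≤ B s := by
    intro s t hs hst
    exact csSup_le_csSup (hBdd s hs) (⟨|A t|, t, mem_Ici.2 le_rfl, rfl⟩)
      (image_mono (Ici_subset_Ici.2 hst))
  have hBle : ∀ t, t0 ≤ t → B t ≤ M := fun t ht =>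
    Real.sSup_le (by rintro x ⟨v, hv, rfl⟩; exact hM v (ht.trans hv)) hM0
  -- step 2 : tail of ξ small
  obtain ⟨T, hTt0, hT⟩ : ∃ T, t0 ≤ T ∧ ∫ x in Ici T, ξ x ≤ 1/2 := by
    have hanti : Antitone (fun n : ℕ => Ici (t0 + (n:ℝ))) := by
      intro m n hmn
      exact Ici_subset_Ici.2 (by exact_mod_cast add_le_add_right (Nat.cast_le.2 hmn) t0)
    have hint : ⋂ n : ℕ, Ici (t0 + (n:ℝ)) = (∅ : Set ℝ) := by
      apply eq_empty_iff_forall_notMem.2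
      intro x hx
      simp only [mem_iInter, mem_Ici] at hx
      obtain ⟨n, hn⟩ := exists_nat_gt (x - t0)
      linarith [hx n]
    have htend := tendsto_setIntegral_of_antitone (f := ξ) (μ := volume)
      (fun n : ℕ => measurableSet_Ici) hanti
      ⟨0, by simpa using hξint⟩
    rw [hint] at htend
    simp only [Measure.restrict_empty, integral_zero_measure] at htend
    obtain ⟨n, hn⟩ := (htend.eventually_le_const (by norm_num : (0:ℝ) < 1/2)).exists
    exact ⟨t0 + n, le_add_of_nonneg_right (Nat.cast_nonneg n), hn⟩
  -- FTC identity
  have key : ∀ s v, t0 ≤ s → s ≤ v →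
      Real.exp (ρ*v) * A v - Real.exp (ρ*s) * A s
        = ∫ u in s..v, Real.exp (ρ*u) * (A' u + ρ * A u) := by
    intro s v hs hsv
    have hsub : uIcc s v ⊆ Ici t0 := by
      rw [uIcc_of_le hsv]; exact fun x hx => hs.trans hx.1
    have hderiv : ∀ u ∈ uIcc s v, HasDerivAt (fun u => Real.exp (ρ*u) * A u)
        (Real.exp (ρ*u) * (A' u + ρ * A u)) u := by
      intro u hu
      have hu' : t0 ≤ u := hsub hu
      have h1 : HasDerivAt (fun u : ℝ => Real.exp (ρ*u)) (Real.exp (ρ*u) * (ρ*1)) u :=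
        ((hasDerivAt_id u).const_mul ρ).exp
      have h2 : HasDerivAt (fun u => Real.exp (ρ*u) * A u) _ u := h1.mul (hA u hu')
      convert h2 using 1
      ring
    have hcont : ContinuousOn (fun u => Real.exp (ρ*u) * (A' u + ρ * A u)) (uIcc s v) := by
      exact ((Real.continuous_exp.comp (continuous_const.mul continuous_id)).continuousOn).mul
        ((hA'c.mono hsub).add (continuousOn_const.mul (hAcont.mono hsub)))
    exact (intervalIntegral.integral_eq_sub_of_hasDerivAt hderiv
      hcont.intervalIntegrable).symm
  -- tail integral bound
  have hxi_tail : ∀ s v, T ≤ s → s ≤ v → ∫ u in s..v, ξ u ≤ 1/2 := by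
    intro s v hs hsv
    rw [intervalIntegral.integral_of_le hsv]
    refine le_trans ?_ hT
    refine setIntegral_mono_set (hξint.mono_set (Ici_subset_Ici.2 hTt0)) ?_ ?_
    · exact (ae_restrict_iff' measurableSet_Ici).2
        (ae_of_all _ (fun x hx => hξ0 x (hTt0.trans hx)))
    · exact HasSubset.Subset.eventuallyLE (fun x hx => hs.trans hx.1.le)
  -- step 3/4 : B s ≤ 2 |A s| for s ≥ T
  have hB2 : ∀ s, T ≤ s → B s ≤ 2 * |A s| := by
    intro s hs
    have hs0 : t0 ≤ s := hTt0.trans hs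
    have hv : ∀ v, s ≤ v → |A v| ≤ |A s| + B s / 2 := by
      intro v hsv
      have hv0 : t0 ≤ v := hs0.trans hsv
      have hid := key s v hs0 hsv
      have hIccsub : Icc s v ⊆ Ici t0 := fun x hx => hs0.trans hx.1
      have hfint : IntervalIntegrable (fun u => |Real.exp (ρ*u) * (A' u + ρ * A u)|)
          volume s v := by
        apply ContinuousOn.intervalIntegrable
        have hsub : uIcc s v ⊆ Ici t0 := by rw [uIcc_of_le hsv]; exact hIccsub
        exact (((Real.continuous_exp.comp (continuous_const.mul continuous_id)).continuousOn).mul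
          ((hA'c.mono hsub).add (continuousOn_const.mul (hAcont.mono hsub)))).abs
      have hgint : IntervalIntegrable (fun u => Real.exp (ρ*v) * B s * ξ u) volume s v := by
        apply ContinuousOn.intervalIntegrable
        have hsub : uIcc s v ⊆ Ici t0 := by rw [uIcc_of_le hsv]; exact hIccsub
        exact continuousOn_const.mul (hξc.mono hsub)
      have hptwise : ∀ u ∈ Icc s v,
          |Real.exp (ρ*u) * (A' u + ρ * A u)| ≤ Real.exp (ρ*v) * B s * ξ u := by
        intro u hu
        have hu0 : t0 ≤ u := hIccsub hu
        have hh : |A' u + ρ * A u| ≤ ξ u * B u := h u hu0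
        have hBu : B u ≤ B s := hBanti s u hs0 hu.1
        have hBu0 : 0 ≤ B u := hB0 u hu0
        have hξu : 0 ≤ ξ u := hξ0 u hu0
        have hexp : Real.exp (ρ*u) ≤ Real.exp (ρ*v) := by
          apply Real.exp_le_exp.2
          exact mul_le_mul_of_nonneg_left hu.2 hρ.le
        rw [abs_mul, abs_of_pos (Real.exp_pos _)]
        calc Real.exp (ρ*u) * |A' u + ρ * A u| ≤ Real.exp (ρ*u) * (ξ u * B u) :=
              mul_le_mul_of_nonneg_left hh (Real.exp_pos _).le
          _ ≤ Real.exp (ρ*v) * (ξ u * B s) := by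
              apply mul_le_mul hexp (mul_le_mul_of_nonneg_left hBu hξu)
                (mul_nonneg hξu hBu0) (Real.exp_pos _).le
          _ = Real.exp (ρ*v) * B s * ξ u := by ring
      have hint1 : |∫ u in s..v, Real.exp (ρ*u) * (A' u + ρ * A u)|
          ≤ Real.exp (ρ*v) * B s * (1/2) := by
        calc |∫ u in s..v, Real.exp (ρ*u) * (A' u + ρ * A u)|
            ≤ ∫ u in s..v, |Real.exp (ρ*u) * (A' u + ρ * A u)| :=
              intervalIntegral.abs_integral_le_integral_abs hsv
          _ ≤ ∫ u in s..v, Real.exp (ρ*v) * B s * ξ u :=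
              intervalIntegral.integral_mono_on hsv hfint hgint hptwise
          _ = Real.exp (ρ*v) * B s * ∫ u in s..v, ξ u := by
              rw [intervalIntegral.integral_const_mul]
          _ ≤ Real.exp (ρ*v) * B s * (1/2) := by
              apply mul_le_mul_of_nonneg_left (hxi_tail s v hs hsv)
              exact mul_nonneg (Real.exp_pos _).le (hB0 s hs0)
      have hAv : Real.exp (ρ*v) * |A v| ≤ Real.exp (ρ*v) * (|A s| + B s / 2) := by
        have h1 : Real.exp (ρ*v) * |A v| = |Real.exp (ρ*v) * A v| := by
          rw [abs_mul, abs_of_pos (Real.exp_pos _)]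
        have h2 : Real.exp (ρ*v) * A v = Real.exp (ρ*s) * A s
            + ∫ u in s..v, Real.exp (ρ*u) * (A' u + ρ * A u) := by linarith [hid]
        have hexp : Real.exp (ρ*s) ≤ Real.exp (ρ*v) :=
          Real.exp_le_exp.2 (mul_le_mul_of_nonneg_left hsv hρ.le)
        calc Real.exp (ρ*v) * |A v| = |Real.exp (ρ*v) * A v| := h1
          _ ≤ |Real.exp (ρ*s) * A s| + |∫ u in s..v, Real.exp (ρ*u) * (A' u + ρ * A u)| := by
              rw [h2]; exact abs_add_le _ _
          _ ≤ Real.exp (ρ*s) * |A s| + Real.exp (ρ*v) * B s * (1/2) := by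
              rw [abs_mul, abs_of_pos (Real.exp_pos _)]
              linarith [hint1]
          _ ≤ Real.exp (ρ*v) * (|A s| + B s / 2) := by
              have := mul_le_mul_of_nonneg_right hexp (abs_nonneg (A s))
              nlinarith [this]
      exact le_of_mul_le_mul_left hAv (Real.exp_pos _)
    have hBs : B s ≤ |A s| + B s / 2 := by
      apply Real.sSup_le
      · rintro x ⟨v, hvmem, rfl⟩
        exact hv v hvmem
      · have := hB0 s hs0
        positivity
    linarith [hBs]
  -- step 5 : decay
  have hdecay : ∀ s, T ≤ s →
      |A s| ≤ (M + 1) * Real.exp (ρ * T) * Real.exp 2 * Real.exp (-ρ * s) := by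
    intro s hs
    set J : ℝ → ℝ := fun x => ∫ u in T..x, ξ u with hJdef
    set φ : ℝ → ℝ := fun x => (A x)^2 * Real.exp (2*ρ*x - 4 * J x) with hφdef
    have hφs : φ s ≤ φ T := by
      have hIccsub : Icc T s ⊆ Ici t0 := fun x hx => hTt0.trans hx.1
      have hJcont : ContinuousOn J (Icc T s) := by
        have h1 : ContinuousOn (fun x => ∫ u in Ioc T x, ξ u) (Icc T s) :=
          intervalIntegral.continuousOn_primitive
            (hξint.mono_set (fun x hx => hIccsub hx))
        exact h1.congr (fun x hx => intervalIntegral.integral_of_le hx.1)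
      have hAc : ContinuousOn A (Icc T s) := hAcont.mono hIccsub
      have hφcont : ContinuousOn φ (Icc T s) := by
        apply (hAc.pow 2).mul
        exact Real.continuous_exp.comp_continuousOn
          ((continuousOn_const.mul continuousOn_id).sub (continuousOn_const.mul hJcont))
      have hderiv : ∀ x ∈ Ioo T s, HasDerivAt φ
          ((2 * A x ^ 1 * A' x) * Real.exp (2*ρ*x - 4 * J x)
            + A x ^ 2 * (Real.exp (2*ρ*x - 4 * J x) * (2*ρ*1 - 4 * ξ x))) x := by
        intro x hx
        have hx0 : t0 ≤ x := hTt0.trans hx.1.le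
        have hxT : T < x := hx.1
        have hxt0 : t0 < x := lt_of_le_of_lt hTt0 hxT
        have hJx : HasDerivAt J (ξ x) x := by
          apply intervalIntegral.integral_hasDerivAt_right
          · apply ContinuousOn.intervalIntegrable
            have hsub : uIcc T x ⊆ Ici t0 := by
              rw [uIcc_of_le hxT.le]; exact fun y hy => hTt0.trans hy.1
            exact hξc.mono hsub
          · exact ⟨Ici t0, Ici_mem_nhds hxt0, hξc.aestronglyMeasurable measurableSet_Ici⟩
          · exact hξc.continuousAt (Ici_mem_nhds hxt0)
        have hinner : HasDerivAt (fun y => 2*ρ*y - 4 * J y) (2*ρ*1 - 4 * ξ x) x :=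
          ((hasDerivAt_id x).const_mul (2*ρ)).sub (hJx.const_mul 4)
        exact ((hA x hx0).pow 2).mul hinner.exp
      apply antitoneOn_of_deriv_nonpos (convex_Icc T s) hφcont
      · intro x hx
        rw [interior_Icc] at hx
        exact ((hderiv x hx).differentiableAt).differentiableWithinAt
      · intro x hx
        rw [interior_Icc] at hx
        rw [(hderiv x hx).deriv]
        have hx0 : t0 ≤ x := hTt0.trans hx.1.le
        have hh : |A' x + ρ * A x| ≤ ξ x * B x := h x hx0
        have hBx : B x ≤ 2 * |A x| := hB2 x hx.1.le
        have hξx : 0 ≤ ξ x := hξ0 x hx0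
        have hkey : 2 * A x * (A' x + ρ * A x) ≤ 4 * ξ x * A x ^ 2 := by
          have h1 : 2 * A x * (A' x + ρ * A x) ≤ 2 * |A x| * |A' x + ρ * A x| := by
            calc 2 * A x * (A' x + ρ * A x) ≤ |2 * A x * (A' x + ρ * A x)| := le_abs_self _
              _ = 2 * |A x| * |A' x + ρ * A x| := by
                  rw [abs_mul, abs_mul]; norm_num
          have h2 : ξ x * B x ≤ 2 * ξ x * |A x| := by nlinarith
          nlinarith [abs_nonneg (A x), sq_abs (A x), mul_le_mul_of_nonneg_left hh
            (by positivity : (0:ℝ) ≤ 2 * |A x|)]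
        have hE : (0:ℝ) < Real.exp (2*ρ*x - 4 * J x) := Real.exp_pos _
        nlinarith [mul_le_mul_of_nonneg_right hkey hE.le]
      · exact left_mem_Icc.2 hs
      · exact right_mem_Icc.2 hs
      · exact hs
    have hJT : J T = 0 := intervalIntegral.integral_same
    have hJs_le : J s ≤ 1/2 := hxi_tail T s le_rfl hs
    have hJs_0 : 0 ≤ J s := by
      apply intervalIntegral.integral_nonneg hs
      exact fun u hu => hξ0 u (hTt0.trans hu.1)
    have e1 : A s ^ 2 * Real.exp (2*ρ*s - 4 * J s) ≤ A T ^ 2 * Real.exp (2*ρ*T) := by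
      have := hφs
      simp only [hφdef, hJT] at this
      simpa using this
    have e2 : A s ^ 2 ≤ A T ^ 2 * Real.exp (2*ρ*T) * Real.exp (-(2*ρ*s - 4 * J s)) := by
      have h' := mul_le_mul_of_nonneg_right e1 (Real.exp_pos (-(2*ρ*s - 4 * J s))).le
      calc A s ^ 2 = A s ^ 2 * (Real.exp (2*ρ*s - 4 * J s) * Real.exp (-(2*ρ*s - 4 * J s))) := by
            rw [← Real.exp_add, add_neg_cancel, Real.exp_zero, mul_one]
        _ = A s ^ 2 * Real.exp (2*ρ*s - 4 * J s) * Real.exp (-(2*ρ*s - 4 * J s)) := by ring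
        _ ≤ _ := h'
    have e3 : Real.exp (-(2*ρ*s - 4 * J s)) ≤ Real.exp 2 * Real.exp (-(2*ρ*s)) := by
      rw [← Real.exp_add]
      exact Real.exp_le_exp.2 (by linarith)
    have e4 : A s ^ 2 ≤ M ^ 2 * Real.exp (2*ρ*T) * (Real.exp 2 * Real.exp (-(2*ρ*s))) := by
      have hAT2 : A T ^ 2 ≤ M ^ 2 := by
        nlinarith [hM T hTt0, abs_nonneg (A T), sq_abs (A T)]
      calc A s ^ 2 ≤ A T ^ 2 * Real.exp (2*ρ*T) * Real.exp (-(2*ρ*s - 4 * J s)) := e2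
        _ ≤ M ^ 2 * Real.exp (2*ρ*T) * (Real.exp 2 * Real.exp (-(2*ρ*s))) := by
            have hp1 : (0:ℝ) ≤ Real.exp (2*ρ*T) := (Real.exp_pos _).le
            have hp2 : (0:ℝ) ≤ A T ^ 2 * Real.exp (2*ρ*T) := by positivity
            calc A T ^ 2 * Real.exp (2*ρ*T) * Real.exp (-(2*ρ*s - 4 * J s))
                ≤ A T ^ 2 * Real.exp (2*ρ*T) * (Real.exp 2 * Real.exp (-(2*ρ*s))) :=
                  mul_le_mul_of_nonneg_left e3 hp2
              _ ≤ M ^ 2 * Real.exp (2*ρ*T) * (Real.exp 2 * Real.exp (-(2*ρ*s))) := by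
                  apply mul_le_mul_of_nonneg_right _ (by positivity)
                  exact mul_le_mul_of_nonneg_right hAT2 hp1
    have hR2 : ((M + 1) * Real.exp (ρ * T) * Real.exp 2 * Real.exp (-ρ * s)) ^ 2
        = (M + 1) ^ 2 * Real.exp (2*ρ*T) * ((Real.exp 2) ^ 2 * Real.exp (-(2*ρ*s))) := by
      rw [show (2*ρ*T) = ρ*T + ρ*T by ring, show (-(2*ρ*s)) = -ρ*s + -ρ*s by ring,
        Real.exp_add, Real.exp_add]
      ring
    have hA2 : A s ^ 2 ≤ ((M + 1) * Real.exp (ρ * T) * Real.exp 2 * Real.exp (-ρ * s)) ^ 2 := by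
      rw [hR2]
      have h4 : (1:ℝ) ≤ Real.exp 2 := Real.one_le_exp (by norm_num)
      refine le_trans e4 ?_
      have hg : M ^ 2 * Real.exp (2*ρ*T) * (Real.exp 2 * Real.exp (-(2*ρ*s)))
          ≤ (M + 1) ^ 2 * Real.exp (2*ρ*T) * ((Real.exp 2) ^ 2 * Real.exp (-(2*ρ*s))) := by
        gcongr
        · nlinarith
        · nlinarith [Real.exp_pos (2:ℝ)]
      exact hg
    have hR0 : (0:ℝ) ≤ (M + 1) * Real.exp (ρ * T) * Real.exp 2 * Real.exp (-ρ * s) := by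
      positivity
    exact abs_le.2 (abs_le_of_sq_le_sq' hA2 hR0)
  refine ⟨(M + 1) * Real.exp (ρ * T) * Real.exp 2, by positivity, ?_⟩
  intro t ht
  rcases le_or_gt T t with hTt | htT
  · exact hdecay t hTt
  · have h1 : |A t| ≤ M := hM t ht
    have h2 : Real.exp (ρ * T) * Real.exp (-ρ * t) ≥ 1 := by
      rw [← Real.exp_add]
      have : 0 ≤ ρ * T + -ρ * t := by nlinarith [htT.le]
      calc (1:ℝ) = Real.exp 0 := (Real.exp_zero).symm
        _ ≤ Real.exp (ρ * T + -ρ * t) := Real.exp_le_exp.2 this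
    have h3 : (M + 1) * Real.exp 2 * 1 ≤ (M + 1) * Real.exp 2 * (Real.exp (ρ*T) * Real.exp (-ρ*t)) :=
      mul_le_mul_of_nonneg_left h2 (by positivity)
    have h4 : (1:ℝ) ≤ Real.exp 2 := Real.one_le_exp (by norm_num)
    nlinarith [h3, h4, hM0]
end

section
/- Let $t_0 \in \mathbb{R}$, $S \ge t_0$, $e_\beta > 0$, $C \ge 0$, and let $y : [t_0, S] \to [0, \infty)$ be continuous. If for all $t \in [t_0, S]$, $y(t) \le C e^{-e_\beta t} + \frac{e_\beta}{10} \int_t^{S} y(s)\,ds$, then there exists a constant $C' \ge 0$ depending only on $C$ and $e_\beta$ (not on $S$ or $t_0$) such that $y(t) \le C' e^{-e_\beta t}$ for all $t \in [t_0, S]$. -/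
open Real Set MeasureTheory

theorem stmt2 (eβ C : ℝ) (heβ : 0 < eβ) (hC : 0 ≤ C) :
    ∃ C' ≥ 0, ∀ t0 S : ℝ, t0 ≤ S → ∀ y : ℝ → ℝ,
      ContinuousOn y (Icc t0 S) → (∀ t ∈ Icc t0 S, 0 ≤ y t) →
      (∀ t ∈ Icc t0 S, y t ≤ C * Real.exp (-eβ * t) + eβ / 10 * ∫ s in t..S, y s) →
      ∀ t ∈ Icc t0 S, y t ≤ C' * Real.exp (-eβ * t) := by
  refine ⟨10 * C / 9, by positivity, ?_⟩
  intro t0 S hS y hy hynn hle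
  -- extend y to a continuous function on ℝ by clamping
  set z : ℝ → ℝ := fun t => y (min (max t t0) S) with hz_def
  have hz_mem : ∀ t : ℝ, min (max t t0) S ∈ Icc t0 S := fun t =>
    ⟨le_min (le_max_right _ _) hS, min_le_right _ _⟩
  have hzeq : ∀ t ∈ Icc t0 S, z t = y t := by
    intro t ht
    simp [hz_def, max_eq_left ht.1, min_eq_left ht.2]
  have hzc : Continuous z := by
    apply hy.comp_continuous _ hz_mem
    exact (continuous_id.max continuous_const).min continuous_const
  have hznn : ∀ t, 0 ≤ z t := fun t => hynn _ (hz_mem t)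
  have hint : ∀ t ∈ Icc t0 S, (∫ s in t..S, y s) = ∫ s in t..S, z s := by
    intro t ht
    apply intervalIntegral.integral_congr
    intro s hs
    rw [uIcc_of_le ht.2] at hs
    exact (hzeq s ⟨ht.1.trans hs.1, hs.2⟩).symm
  set F : ℝ → ℝ := fun t => ∫ s in t..S, z s with hF_def
  have hFS : F S = 0 := intervalIntegral.integral_same
  have hF : ∀ t, HasDerivAt F (-(z t)) t := by
    intro t
    have h1 : HasDerivAt (fun u => ∫ s in S..u, z s) (z t) t :=
      intervalIntegral.integral_hasDerivAt_right (hzc.intervalIntegrable _ _)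
        (hzc.aestronglyMeasurable.stronglyMeasurableAtFilter) hzc.continuousAt
    have h2 := h1.neg
    have heq : F = -fun u => ∫ s in S..u, z s := by
      ext u
      rw [hF_def]
      simp [intervalIntegral.integral_symm S u]
    rw [heq]
    exact h2
  -- key inequality for z on Icc
  have hlez : ∀ t ∈ Icc t0 S, z t ≤ C * Real.exp (-eβ * t) + eβ / 10 * F t := by
    intro t ht
    rw [hzeq t ht, hF_def]
    simpa [hint t ht] using hle t ht
  set K : ℝ := 10 * C / (9 * eβ) with hK_def
  have hK : K * (9 * eβ / 10) = C := by
    rw [hK_def]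
    field_simp
  set g : ℝ → ℝ := fun t =>
    Real.exp (eβ * t / 10) * F t - K * Real.exp (-(9 * eβ / 10) * t) with hg_def
  have hg' : ∀ t, HasDerivAt g
      (Real.exp (eβ * t / 10) * (eβ / 10 * F t - z t) + C * Real.exp (-(9 * eβ / 10) * t)) t := by
    intro t
    have he1 : HasDerivAt (fun t => Real.exp (eβ * t / 10)) (eβ / 10 * Real.exp (eβ * t / 10)) t := by
      have := (Real.hasDerivAt_exp (eβ * t / 10)).comp t
        (((hasDerivAt_id t).const_mul eβ).div_const 10)
      exact this.congr_deriv (by ring)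
    have he2 : HasDerivAt (fun t => K * Real.exp (-(9 * eβ / 10) * t))
        (K * (-(9 * eβ / 10) * Real.exp (-(9 * eβ / 10) * t))) t := by
      have := (Real.hasDerivAt_exp (-(9 * eβ / 10) * t)).comp t
        ((hasDerivAt_id t).const_mul (-(9 * eβ / 10)))
      exact (this.const_mul K).congr_deriv (by ring)
    have := ((he1.mul (hF t)).sub he2)
    apply this.congr_deriv
    have : K * (9 * eβ / 10) = C := hK
    nlinarith [this, Real.exp_pos (eβ * t / 10), Real.exp_pos (-(9 * eβ / 10) * t)]
  have hmono : MonotoneOn g (Icc t0 S) := by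
    apply monotoneOn_of_deriv_nonneg (convex_Icc _ _)
      (fun t _ => (hg' t).continuousAt.continuousWithinAt)
      (fun t _ => ((hg' t).differentiableAt).differentiableWithinAt)
    intro t ht
    rw [interior_Icc] at ht
    rw [(hg' t).deriv]
    have h1 := hlez t ⟨ht.1.le, ht.2.le⟩
    have h2 : eβ / 10 * F t - z t ≥ -(C * Real.exp (-eβ * t)) := by linarith
    have h3 : Real.exp (eβ * t / 10) * (C * Real.exp (-eβ * t))
        = C * Real.exp (-(9 * eβ / 10) * t) := by
      rw [mul_left_comm, ← Real.exp_add]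
      have harg : eβ * t / 10 + -eβ * t = -(9 * eβ / 10) * t := by ring
      rw [harg]
    have h4 := mul_le_mul_of_nonneg_left h2 (Real.exp_pos (eβ * t / 10)).le
    have h5 : Real.exp (eβ * t / 10) * -(C * Real.exp (-eβ * t))
        = -(C * Real.exp (-(9 * eβ / 10) * t)) := by rw [mul_neg, h3]
    linarith
  intro t ht
  have hgt : g t ≤ g S := hmono ht (right_mem_Icc.2 hS) ht.2
  have hgS : g S = -(K * Real.exp (-(9 * eβ / 10) * S)) := by
    simp [hg_def, hFS]
  have hKnn : 0 ≤ K := by positivity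
  have hFt : F t ≤ K * Real.exp (-eβ * t) := by
    have h1 : Real.exp (eβ * t / 10) * F t ≤ K * Real.exp (-(9 * eβ / 10) * t) := by
      have := hgt
      rw [hgS] at this
      have hexp : 0 ≤ K * Real.exp (-(9 * eβ / 10) * S) := by positivity
      simp only [hg_def] at this
      linarith
    have h2 : Real.exp (eβ * t / 10) * (K * Real.exp (-eβ * t))
        = K * Real.exp (-(9 * eβ / 10) * t) := by
      rw [mul_comm K, ← mul_assoc, ← Real.exp_add]
      ring_nf
    rw [← h2] at h1
    exact le_of_mul_le_mul_left h1 (Real.exp_pos _)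
  have h4 := hlez t ht
  have h5 : eβ / 10 * F t ≤ eβ / 10 * (K * Real.exp (-eβ * t)) :=
    mul_le_mul_of_nonneg_left hFt (by positivity)
  have h6 : eβ / 10 * (K * Real.exp (-eβ * t)) = C / 9 * Real.exp (-eβ * t) := by
    rw [hK_def]
    field_simp
  rw [← hzeq t ht]
  calc z t ≤ C * Real.exp (-eβ * t) + eβ / 10 * F t := h4
    _ ≤ C * Real.exp (-eβ * t) + C / 9 * Real.exp (-eβ * t) := by rw [← h6]; linarith
    _ = 10 * C / 9 * Real.exp (-eβ * t) := by ring
end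

section
/- Let $e_k, e_j, \sigma > 0$ with $e_k \le e_j$, let $C \ge 0$, $S \ge t_0$, and let $\alpha : [t_0, S] \to \mathbb{R}$ be $C^1$ satisfying $|\alpha'(t) + e_k\,\alpha(t)| \le C e^{-(e_j + 4\sigma)t}$ for all $t \in [t_0, S]$ and $|\alpha(S)| \le C e^{-(e_j + 4\sigma)S}$. Then there exists $C' \ge 0$ depending only on $C$, $e_k$, $e_j$, $\sigma$ such that $|\alpha(t)| \le C' e^{-(e_j + 4\sigma)t}$ for all $t \in [t_0, S]$. -/
open Real Set

theorem stmt8 (C ek ej σ : ℝ) (hC : 0 ≤ C) (hek : 0 < ek) (hej : 0 < ej)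
    (hkj : ek ≤ ej) (hσ : 0 < σ) :
    ∃ C' ≥ 0, ∀ t0 S : ℝ, t0 ≤ S → ∀ α α' : ℝ → ℝ,
      (∀ t ∈ Icc t0 S, HasDerivAt α (α' t) t) →
      ContinuousOn α' (Icc t0 S) →
      (∀ t ∈ Icc t0 S, |α' t + ek * α t| ≤ C * Real.exp (-(ej + 4 * σ) * t)) →
      |α S| ≤ C * Real.exp (-(ej + 4 * σ) * S) →
      ∀ t ∈ Icc t0 S, |α t| ≤ C' * Real.exp (-(ej + 4 * σ) * t) := by
  set μ : ℝ := ej + 4 * σ - ek with hμdef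
  have hμ : 0 < μ := by simp only [hμdef]; linarith
  refine ⟨C + C / μ, by positivity, ?_⟩
  intro t0 S hts α α' hderiv hcont hbound hSb t ht
  obtain ⟨ht0, htS⟩ := ht
  set β : ℝ → ℝ := fun s => Real.exp (ek * s) * α s with hβdef
  set β' : ℝ → ℝ := fun s => Real.exp (ek * s) * (α' s + ek * α s) with hβ'def
  have hsub : Icc t S ⊆ Icc t0 S := Icc_subset_Icc ht0 le_rfl
  have huIcc : uIcc t S = Icc t S := uIcc_of_le htS
  have hβderiv : ∀ s ∈ Icc t0 S, HasDerivAt β (β' s) s := by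
    intro s hs
    have h1 : HasDerivAt (fun x => Real.exp (ek * x)) (ek * Real.exp (ek * s)) s := by
      have := ((hasDerivAt_id s).const_mul ek).exp
      simpa [mul_comm] using this
    have := h1.mul (hderiv s hs)
    refine this.congr_deriv ?_
    simp only [hβ'def]; ring
  -- bound on |β'|
  have hβ'bound : ∀ s ∈ Icc t0 S, |β' s| ≤ C * Real.exp (-μ * s) := by
    intro s hs
    have : |β' s| = Real.exp (ek * s) * |α' s + ek * α s| := by
      simp [hβ'def, abs_mul, abs_of_pos (Real.exp_pos _)]
    rw [this]
    calc Real.exp (ek * s) * |α' s + ek * α s|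
        ≤ Real.exp (ek * s) * (C * Real.exp (-(ej + 4 * σ) * s)) := by
          exact mul_le_mul_of_nonneg_left (hbound s hs) (Real.exp_pos _).le
      _ = C * Real.exp (-μ * s) := by
          rw [mul_comm (Real.exp (ek*s)), mul_assoc, ← Real.exp_add, hμdef]
          congr 2; ring
  -- integrability
  have hcontβ' : ContinuousOn β' (Icc t S) := by
    apply ContinuousOn.mul
    · exact (Real.continuous_exp.comp (continuous_const.mul continuous_id)).continuousOn
    · exact (hcont.mono hsub).add
        (continuousOn_const.mul (fun s hs => ((hderiv s (hsub hs)).continuousAt.continuousWithinAt)))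
  have hint : IntervalIntegrable β' MeasureTheory.volume t S := by
    rw [intervalIntegrable_iff_integrableOn_Icc_of_le htS]
    exact hcontβ'.integrableOn_Icc
  -- FTC
  have hFTC : ∫ s in t..S, β' s = β S - β t := by
    apply intervalIntegral.integral_eq_sub_of_hasDerivAt
    · intro s hs; exact hβderiv s (hsub (huIcc ▸ hs))
    · exact hint
  -- bound the integral
  have hintg : Continuous (fun s => C * Real.exp (-μ * s)) :=
    continuous_const.mul (Real.continuous_exp.comp (continuous_const.mul continuous_id))
  have hintbound : |∫ s in t..S, β' s| ≤ ∫ s in t..S, C * Real.exp (-μ * s) := by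
    calc |∫ s in t..S, β' s| ≤ ∫ s in t..S, |β' s| := by
          simpa using intervalIntegral.abs_integral_le_integral_abs htS
      _ ≤ ∫ s in t..S, C * Real.exp (-μ * s) := by
          apply intervalIntegral.integral_mono_on htS hint.abs
            (hintg.intervalIntegrable t S)
          intro s hs; exact hβ'bound s (hsub hs)
  -- compute the integral of the exponential
  have hcomp : ∫ s in t..S, C * Real.exp (-μ * s)
      = C / μ * Real.exp (-μ * t) - C / μ * Real.exp (-μ * S) := by
    have : ∫ s in t..S, C * Real.exp (-μ * s)
        = (fun s => -(C / μ) * Real.exp (-μ * s)) S - (fun s => -(C / μ) * Real.exp (-μ * s)) t := by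
      apply intervalIntegral.integral_eq_sub_of_hasDerivAt
      · intro s hs
        have h1 : HasDerivAt (fun x => Real.exp (-μ * x)) (-μ * Real.exp (-μ * s)) s := by
          have := ((hasDerivAt_id s).const_mul (-μ)).exp
          simpa [mul_comm] using this
        have := h1.const_mul (-(C / μ))
        refine this.congr_deriv ?_
        field_simp
      · exact (hintg.intervalIntegrable t S)
    rw [this]; ring
  have hexpmono : Real.exp (-μ * S) ≤ Real.exp (-μ * t) := by
    apply Real.exp_le_exp.mpr; nlinarith
  -- |β t| bound
  have hβS : |β S| ≤ C * Real.exp (-μ * S) := by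
    have : |β S| = Real.exp (ek * S) * |α S| := by
      simp [hβdef, abs_mul, abs_of_pos (Real.exp_pos _)]
    rw [this]
    calc Real.exp (ek * S) * |α S| ≤ Real.exp (ek * S) * (C * Real.exp (-(ej + 4 * σ) * S)) :=
          mul_le_mul_of_nonneg_left hSb (Real.exp_pos _).le
      _ = C * Real.exp (-μ * S) := by
          rw [mul_comm (Real.exp (ek*S)), mul_assoc, ← Real.exp_add, hμdef]
          congr 2; ring
  have hβt : |β t| ≤ (C + C / μ) * Real.exp (-μ * t) := by
    have h1 : |β t| ≤ |β S| + |∫ s in t..S, β' s| := by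
      have : β t = β S - ∫ s in t..S, β' s := by rw [hFTC]; ring
      rw [this]
      simpa using norm_sub_le (β S) (∫ s in t..S, β' s)
    have h2 : ∫ s in t..S, C * Real.exp (-μ * s) ≤ C / μ * Real.exp (-μ * t) := by
      rw [hcomp]
      have : 0 ≤ C / μ * Real.exp (-μ * S) := by positivity
      linarith
    calc |β t| ≤ |β S| + |∫ s in t..S, β' s| := h1
      _ ≤ C * Real.exp (-μ * S) + C / μ * Real.exp (-μ * t) := by
          have := hintbound.trans h2; linarith [hβS]
      _ ≤ (C + C / μ) * Real.exp (-μ * t) := by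
          have := mul_le_mul_of_nonneg_left hexpmono hC; nlinarith
  -- conclude
  have hαt : |α t| = Real.exp (-(ek * t)) * |β t| := by
    simp [hβdef, abs_mul, abs_of_pos (Real.exp_pos _), ← mul_assoc, ← Real.exp_add]
  rw [hαt]
  calc Real.exp (-(ek * t)) * |β t| ≤ Real.exp (-(ek * t)) * ((C + C / μ) * Real.exp (-μ * t)) :=
        mul_le_mul_of_nonneg_left hβt (Real.exp_pos _).le
    _ = (C + C / μ) * Real.exp (-(ej + 4 * σ) * t) := by
        rw [hμdef, mul_left_comm, ← Real.exp_add]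
        congr 2
        ring
end

section
/- Let $e_1 > 0$, $t_0 \in \mathbb{R}$, and let $\mathcal{A} : [t_0, \infty) \to [0, \infty)$ be $C^1$, bounded, with $\mathcal{A}(t) \to 0$ as $t \to \infty$. Suppose there exists $C \ge 0$ and a continuous integrable function $\xi : [t_0, \infty) \to [0, \infty)$ such that for all $t \ge t_0$: $|\mathcal{A}'(t) + 2e_1 \mathcal{A}(t)| \le C\,\xi(t)\, \sup_{t' \ge t} \mathcal{A}(t')$. Then there exists $c \ge 0$ such that $\mathcal{A}(t) \le c\, e^{-2 e_1 t}$ for all $t \ge t_0$. -/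
open Real Set MeasureTheory Filter

lemma stmt19_tail (t0 : ℝ) (ξ : ℝ → ℝ) (hξint : IntegrableOn ξ (Ici t0)) :
    Tendsto (fun s : ℝ => ∫ x in Ici s, ξ x) atTop (nhds 0) := by
  have hmono : Monotone (fun r : ℝ => Ico t0 r) := fun a b hab => Ico_subset_Ico_right hab
  have hU : (⋃ r : ℝ, Ico t0 r) = Ici t0 := iUnion_Ico_right t0
  have h1 : Tendsto (fun r : ℝ => ∫ x in Ico t0 r, ξ x) atTop (nhds (∫ x in Ici t0, ξ x)) := by
    have := tendsto_setIntegral_of_monotone (fun r : ℝ => measurableSet_Ico) hmono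
      (by rwa [hU] : IntegrableOn ξ (⋃ r : ℝ, Ico t0 r))
    rwa [hU] at this
  have h2 : ∀ᶠ s : ℝ in atTop, (∫ x in Ici s, ξ x) = (∫ x in Ici t0, ξ x) - ∫ x in Ico t0 s, ξ x := by
    filter_upwards [eventually_ge_atTop t0] with s hs
    have hsplit : (∫ x in Ici t0, ξ x) = (∫ x in Ico t0 s, ξ x) + ∫ x in Ici s, ξ x := by
      rw [← setIntegral_union ((Iio_disjoint_Ici le_rfl).mono_left Ico_subset_Iio_self)
        measurableSet_Ici (hξint.mono_set Ico_subset_Ici_self)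
        (hξint.mono_set (Ici_subset_Ici.mpr hs)), Ico_union_Ici_eq_Ici hs]
    linarith
  have h3 : Tendsto (fun s : ℝ => (∫ x in Ici t0, ξ x) - ∫ x in Ico t0 s, ξ x) atTop (nhds 0) := by
    have := (tendsto_const_nhds (x := (∫ x in Ici t0, ξ x)) (f := atTop (α := ℝ))).sub h1
    simpa using this
  exact h3.congr' (h2.mono fun s hs => hs.symm)

-- FTC comparison: f b - f a ≤ ∫ g
lemma stmt19_ftc (t0 a b : ℝ) (ha : t0 ≤ a) (hab : a ≤ b) (f f' g : ℝ → ℝ)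
    (hf : ∀ x ∈ Ici t0, HasDerivAt f (f' x) x)
    (hf'c : ContinuousOn f' (Ici t0)) (hgc : ContinuousOn g (Ici t0))
    (hle : ∀ x ∈ Icc a b, f' x ≤ g x) :
    f b - f a ≤ ∫ x in a..b, g x := by
  have hsub : Icc a b ⊆ Ici t0 := fun x hx => le_trans ha hx.1
  have huIcc : uIcc a b = Icc a b := uIcc_of_le hab
  have hfi : IntervalIntegrable f' volume a b :=
    (hf'c.mono hsub).intervalIntegrable_of_Icc hab
  have hgi : IntervalIntegrable g volume a b :=
    (hgc.mono hsub).intervalIntegrable_of_Icc hab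
  have hFTC : ∫ x in a..b, f' x = f b - f a := by
    apply intervalIntegral.integral_eq_sub_of_hasDerivAt _ hfi
    intro x hx
    exact hf x (hsub (huIcc ▸ hx))
  rw [← hFTC]
  exact intervalIntegral.integral_mono_on hab hfi hgi hle

theorem stmt19 (e1 t0 : ℝ) (he1 : 0 < e1) (A A' ξ : ℝ → ℝ) (C : ℝ) (hC : 0 ≤ C)
    (hd : ∀ t ∈ Ici t0, HasDerivAt A (A' t) t) (hA'c : ContinuousOn A' (Ici t0))
    (hA0 : ∀ t ∈ Ici t0, 0 ≤ A t) (hbdd : BddAbove (A '' Ici t0))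
    (hlim : Tendsto A atTop (nhds 0))
    (hξc : ContinuousOn ξ (Ici t0)) (hξ0 : ∀ t ∈ Ici t0, 0 ≤ ξ t)
    (hξint : IntegrableOn ξ (Ici t0))
    (h : ∀ t ∈ Ici t0, |A' t + 2 * e1 * A t| ≤ C * ξ t * sSup (A '' Ici t)) :
    ∃ c ≥ 0, ∀ t ∈ Ici t0, A t ≤ c * Real.exp (-(2 * e1) * t) := by
  set S : ℝ → ℝ := fun T => sSup (A '' Ici T) with hS
  set u : ℝ → ℝ := fun t => A t * Real.exp (2 * e1 * t) with hu
  have hAc : ContinuousOn A (Ici t0) := fun x hx => (hd x hx).continuousAt.continuousWithinAt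
  have hBdd : ∀ T ≥ t0, BddAbove (A '' Ici T) := fun T hT =>
    hbdd.mono (image_mono (Ici_subset_Ici.mpr hT))
  have hle_S : ∀ T ≥ t0, ∀ τ ≥ T, A τ ≤ S T := fun T hT τ hτ =>
    le_csSup (hBdd T hT) (mem_image_of_mem _ hτ)
  have hS0 : ∀ T ≥ t0, 0 ≤ S T := fun T hT =>
    le_trans (hA0 T hT) (hle_S T hT T le_rfl)
  have hS_anti : ∀ T T', t0 ≤ T → T ≤ T' → S T' ≤ S T := fun T T' hT hTT' =>
    csSup_le_csSup (hBdd T hT) ((nonempty_Ici).image A) (image_mono (Ici_subset_Ici.mpr hTT'))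
  -- attainment of tail supremum
  have attain : ∀ T ≥ t0, ∃ r ≥ T, A r = S T := by
    intro T hT
    rcases le_or_gt (S T) 0 with hST | hST
    · exact ⟨T, le_rfl, le_antisymm (hle_S T hT T le_rfl) (hST.trans (hA0 T hT))⟩
    · obtain ⟨R0, hR0⟩ := (hlim.eventually_le_const (by linarith : (0:ℝ) < S T / 2)).exists_forall_of_atTop
      set R := max R0 T with hR
      have hTR : T ≤ R := le_max_right _ _
      obtain ⟨r, hrmem, hrmax⟩ := (isCompact_Icc (a := T) (b := R)).exists_isMaxOn
        (nonempty_Icc.mpr hTR) (hAc.mono (fun x hx => le_trans hT hx.1))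
      refine ⟨r, hrmem.1, le_antisymm (hle_S T hT r (hrmem.1)) ?_⟩
      rcases le_or_gt (S T) (A r) with h1 | h1
      · exact h1
      · exfalso
        have hub : S T ≤ max (A r) (S T / 2) := by
          apply csSup_le ((nonempty_Ici).image A)
          rintro y ⟨τ, hτ, rfl⟩
          rcases le_or_gt τ R with hτR | hτR
          · exact le_max_of_le_left (hrmax ⟨hτ, hτR⟩)
          · exact le_max_of_le_right (hR0 τ (le_trans (le_max_left _ _) hτR.le))
        have := max_lt h1 (by linarith : S T / 2 < S T)
        exact absurd hub (not_le.mpr this)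
  -- derivative of u
  have hud : ∀ t ∈ Ici t0, HasDerivAt u ((A' t + 2 * e1 * A t) * Real.exp (2 * e1 * t)) t := by
    intro t ht
    have he : HasDerivAt (fun s => Real.exp (2 * e1 * s)) (Real.exp (2 * e1 * t) * (2 * e1)) t := by
      simpa using (HasDerivAt.exp ((hasDerivAt_id t).const_mul (2 * e1)))
    have : HasDerivAt (fun s => A s * Real.exp (2 * e1 * s)) _ t := (hd t ht).mul he
    convert this using 1
    ring
  have hu0 : ∀ t ∈ Ici t0, 0 ≤ u t := fun t ht =>
    mul_nonneg (hA0 t ht) (Real.exp_nonneg _)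
  -- pick s* with C * tail integral ≤ 1/4
  have htail := stmt19_tail t0 ξ hξint
  have hev : ∀ᶠ s : ℝ in atTop, C * (∫ x in Ici s, ξ x) < 1/4 := by
    have : Tendsto (fun s : ℝ => C * ∫ x in Ici s, ξ x) atTop (nhds 0) := by
      simpa using htail.const_mul C
    exact this.eventually_lt_const (by norm_num)
  obtain ⟨s₀, hs₀⟩ := hev.exists_forall_of_atTop
  set s₁ : ℝ := max s₀ t0 with hs₁def
  have hs₁t0 : t0 ≤ s₁ := le_max_right _ _
  set ε : ℝ := ∫ x in Ici s₁, ξ x with hεdef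
  have hCε : C * ε ≤ 1/4 := (hs₀ s₁ (le_max_left _ _)).le
  have hε0 : 0 ≤ ε := setIntegral_nonneg measurableSet_Ici
    (fun x hx => hξ0 x (le_trans hs₁t0 hx))
  -- integral of ξ over any [a,b] ⊆ [s₁,∞) is ≤ ε
  have hsub_int : ∀ a b : ℝ, s₁ ≤ a → a ≤ b → (∫ x in a..b, ξ x) ≤ ε := by
    intro a b ha hab
    rw [intervalIntegral.integral_of_le hab]
    apply setIntegral_mono_set (hξint.mono_set (Ici_subset_Ici.mpr hs₁t0))
    · exact (ae_restrict_iff' measurableSet_Ici).mpr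
        (Filter.Eventually.of_forall fun x hx => hξ0 x (le_trans hs₁t0 hx))
    · exact HasSubset.Subset.eventuallyLE (fun x hx => le_trans ha hx.1.le)
  -- key comparison inequality
  have hkey : ∀ a b K : ℝ, s₁ ≤ a → a ≤ b → 0 ≤ K →
      (∀ τ ∈ Icc a b, S τ * Real.exp (2 * e1 * τ) ≤ K) → u b ≤ u a + C * ε * K := by
    intro a b K ha hab hK hSK
    have hbound : u b - u a ≤ ∫ x in a..b, (C * K) * ξ x := by
      apply stmt19_ftc t0 a b (le_trans hs₁t0 ha) hab u
        (fun t => (A' t + 2 * e1 * A t) * Real.exp (2 * e1 * t)) _ hud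
      · exact ((hA'c.add ((continuousOn_const (c := 2*e1)).mul (hAc))).mul
          (Real.continuous_exp.comp (continuous_const.mul continuous_id)).continuousOn)
      · exact continuousOn_const.mul hξc
      · intro x hx
        have hxt0 : x ∈ Ici t0 := le_trans (le_trans hs₁t0 ha) hx.1
        have h1 : A' x + 2 * e1 * A x ≤ C * ξ x * S x := le_trans (le_abs_self _) (h x hxt0)
        have h2 : (A' x + 2 * e1 * A x) * Real.exp (2 * e1 * x) ≤
            C * ξ x * S x * Real.exp (2 * e1 * x) :=
          mul_le_mul_of_nonneg_right h1 (Real.exp_nonneg _)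
        refine h2.trans ?_
        have h3 : S x * Real.exp (2 * e1 * x) ≤ K := hSK x hx
        have h4 : 0 ≤ C * ξ x := mul_nonneg hC (hξ0 x hxt0)
        calc C * ξ x * S x * Real.exp (2 * e1 * x)
            = (C * ξ x) * (S x * Real.exp (2 * e1 * x)) := by ring
          _ ≤ (C * ξ x) * K := mul_le_mul_of_nonneg_left h3 h4
          _ = (C * K) * ξ x := by ring
    have heq : (∫ x in a..b, (C * K) * ξ x) = (C * K) * ∫ x in a..b, ξ x := by
      exact intervalIntegral.integral_const_mul _ _
    have hCK : 0 ≤ C * K := mul_nonneg hC hK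
    have : (C * K) * (∫ x in a..b, ξ x) ≤ (C * K) * ε :=
      mul_le_mul_of_nonneg_left (hsub_int a b ha hab) hCK
    have : u b - u a ≤ C * ε * K := by
      rw [heq] at hbound; linarith
    linarith
  -- Step A
  have stepA : ∀ T, s₁ ≤ T → S T * Real.exp (2 * e1 * T) ≤ (4/3) * u T := by
    intro T hT
    have hTt0 : t0 ≤ T := le_trans hs₁t0 hT
    obtain ⟨r, hr, hAr⟩ := attain T hTt0
    have hSr : 0 ≤ S T := hS0 T hTt0
    have hKey := hkey T r (S T * Real.exp (2 * e1 * r)) hT hr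
      (mul_nonneg hSr (Real.exp_nonneg _)) ?_
    · have hur : u r = S T * Real.exp (2 * e1 * r) := by rw [hu]; simp [hAr]
      rw [hur] at hKey
      have hx : 0 ≤ S T * Real.exp (2 * e1 * r) := mul_nonneg hSr (Real.exp_nonneg _)
      have h5 : C * ε * (S T * Real.exp (2 * e1 * r)) ≤ (1/4) * (S T * Real.exp (2 * e1 * r)) :=
        mul_le_mul_of_nonneg_right hCε hx
      have h6 : S T * Real.exp (2 * e1 * r) ≤ (4/3) * u T := by linarith
      have h7 : Real.exp (2 * e1 * T) ≤ Real.exp (2 * e1 * r) :=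
        Real.exp_le_exp.mpr (by nlinarith)
      calc S T * Real.exp (2 * e1 * T) ≤ S T * Real.exp (2 * e1 * r) :=
            mul_le_mul_of_nonneg_left h7 hSr
        _ ≤ (4/3) * u T := h6
    · intro τ hτ
      have hτt0 : t0 ≤ τ := le_trans hTt0 hτ.1
      have h8 : S τ ≤ S T := hS_anti T τ hTt0 hτ.1
      have h9 : Real.exp (2 * e1 * τ) ≤ Real.exp (2 * e1 * r) :=
        Real.exp_le_exp.mpr (by nlinarith [hτ.2])
      exact mul_le_mul h8 h9 (Real.exp_nonneg _) hSr
  -- Step B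
  have stepB : ∀ t, s₁ ≤ t → u t ≤ (3/2) * u s₁ := by
    intro t ht
    obtain ⟨m, hmmem, hmmax⟩ := (isCompact_Icc (a := s₁) (b := t)).exists_isMaxOn
      (nonempty_Icc.mpr ht)
      ((hAc.mul (Real.continuous_exp.comp (continuous_const.mul continuous_id)).continuousOn).mono
        (fun x hx => le_trans hs₁t0 hx.1))
    have hum0 : 0 ≤ u m := hu0 m (le_trans hs₁t0 hmmem.1)
    have hKey := hkey s₁ m ((4/3) * u m) le_rfl hmmem.1 (by linarith) ?_
    · have h5 : C * ε * ((4/3) * u m) ≤ (1/4) * ((4/3) * u m) :=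
        mul_le_mul_of_nonneg_right hCε (by linarith)
      have hum : u m ≤ (3/2) * u s₁ := by linarith
      have : u t ≤ u m := hmmax ⟨ht, le_rfl⟩
      linarith
    · intro τ hτ
      have h6 : S τ * Real.exp (2 * e1 * τ) ≤ (4/3) * u τ := stepA τ hτ.1
      have h7 : u τ ≤ u m := hmmax ⟨hτ.1.trans' (le_refl s₁) |>.trans' le_rfl |>.trans le_rfl |>.trans le_rfl, hτ.2.trans hmmem.2⟩
      linarith
  -- conclusion
  set B : ℝ := sSup (A '' Ici t0) with hBdef
  have hB : ∀ t ≥ t0, A t ≤ B := fun t ht => hle_S t0 le_rfl t ht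
  have hB0 : 0 ≤ B := hS0 t0 le_rfl
  refine ⟨max ((3/2) * u s₁) (B * Real.exp (2 * e1 * s₁)), ?_, ?_⟩
  · exact le_trans (mul_nonneg (by norm_num) (hu0 s₁ hs₁t0)) (le_max_left _ _)
  · intro t ht
    have hexp : Real.exp (2 * e1 * t) * Real.exp (-(2 * e1) * t) = 1 := by
      rw [← Real.exp_add]; ring_nf; exact Real.exp_zero
    rcases le_total s₁ t with hst | hst
    · have h1 : u t ≤ (3/2) * u s₁ := stepB t hst
      have h2 : A t = u t * Real.exp (-(2 * e1) * t) := by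
        simp only [hu]; rw [mul_assoc, hexp, mul_one]
      rw [h2]
      calc u t * Real.exp (-(2 * e1) * t) ≤ ((3/2) * u s₁) * Real.exp (-(2 * e1) * t) :=
            mul_le_mul_of_nonneg_right h1 (Real.exp_nonneg _)
        _ ≤ _ := mul_le_mul_of_nonneg_right (le_max_left _ _) (Real.exp_nonneg _)
    · have h1 : A t ≤ B := hB t ht
      have h2 : (1:ℝ) ≤ Real.exp (2 * e1 * s₁) * Real.exp (-(2 * e1) * t) := by
        rw [← Real.exp_add, ← Real.exp_zero]
        apply Real.exp_le_exp.mpr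
        nlinarith
      calc A t ≤ B := h1
        _ = B * 1 := by ring
        _ ≤ B * (Real.exp (2 * e1 * s₁) * Real.exp (-(2 * e1) * t)) :=
            mul_le_mul_of_nonneg_left h2 hB0
        _ = (B * Real.exp (2 * e1 * s₁)) * Real.exp (-(2 * e1) * t) := by ring
        _ ≤ _ := mul_le_mul_of_nonneg_right (le_max_right _ _) (Real.exp_nonneg _)
end
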